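/- Let p and q be distinct odd primes and n = 2pq. If F(z) is a polynomial of degree less than n with coefficients in {−1,0,1} that is divisible by the cyclotomic polynomial Φ_{2n}(z), then there exist polynomials f_1(z) and f_2(z) with integer coefficients, deg f_1 < 2p and deg f_2 < 2q, such that F(z) = f_1(z)·Φ_q(−z^{2p}) + f_2(z)·Φ_p(−z^{2q}). -/

import Mathlib

open Polynomial Finset

lemma bez_pow_sub_one (a b : ℕ) :
    ∃ u v : Polynomial ℤ, u * (X ^ a - 1) + v * (X ^ b - 1) = X ^ (Nat.gcd a b) - 1 := by
  induction a, b using Nat.gcd.induction with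
  | H0 b => exact ⟨0, 1, by simp⟩
  | H1 a b ha ih =>
    obtain ⟨u, v, huv⟩ := ih
    obtain ⟨w, hw⟩ : (X ^ a - 1 : Polynomial ℤ) ∣ (X ^ a) ^ (b / a) - 1 := by
      simpa using sub_dvd_pow_sub_pow (X ^ a : Polynomial ℤ) 1 (b / a)
    refine ⟨v - u * X ^ (b % a) * w, u, ?_⟩
    have hx : (X : Polynomial ℤ) ^ (b % a) * ((X ^ a) ^ (b / a)) = X ^ b := by
      rw [← pow_mul, ← pow_add, Nat.mod_add_div]
    rw [Nat.gcd_rec]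
    linear_combination huv + u * X ^ (b % a) * hw - u * hx

lemma C_prime_mem (r : ℕ) (hr : 1 < r) :
    ∃ u w : Polynomial ℤ, (C (r : ℤ)) = u * cyclotomic (4 * r) ℤ + w * (X ^ 4 - 1) := by
  have h4 : (4 : ℕ) ∈ (4 * r).properDivisors :=
    Nat.mem_properDivisors.mpr ⟨⟨r, rfl⟩, by omega⟩
  obtain ⟨c, hc⟩ := X_pow_sub_one_mul_cyclotomic_dvd_X_pow_sub_one_of_dvd ℤ h4
  set S : Polynomial ℤ := ∑ i ∈ range r, (X ^ 4) ^ i with hSdef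
  have hS : S * (X ^ 4 - 1) = X ^ (4 * r) - 1 := by
    have := geom_sum_mul (X ^ 4 : Polynomial ℤ) r
    rwa [← pow_mul] at this
  have hx : (X ^ 4 - 1 : Polynomial ℤ) ≠ 0 := by
    have : (X ^ 4 - Polynomial.C 1 : Polynomial ℤ).Monic := monic_X_pow_sub_C 1 (by norm_num)
    simpa using this.ne_zero
  have hScyc : S = cyclotomic (4 * r) ℤ * c := by
    apply mul_right_cancel₀ hx
    rw [hS, hc]; ring
  obtain ⟨w, hw⟩ : (X ^ 4 - 1 : Polynomial ℤ) ∣ (S - C (r : ℤ)) := by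
    have : S - C (r : ℤ) = ∑ i ∈ range r, ((X ^ 4) ^ i - 1) := by
      rw [Finset.sum_sub_distrib]
      simp [hSdef]
    rw [this]
    apply Finset.dvd_sum
    intro i _
    simpa using sub_dvd_pow_sub_pow (X ^ 4 : Polynomial ℤ) 1 i
  exact ⟨c, -w, by linear_combination hScyc - hw⟩

lemma cyc_coprime (p q : ℕ) (hp : p.Prime) (hq : q.Prime) (hpq : p ≠ q) :
    IsCoprime (cyclotomic (4 * p) ℤ) (cyclotomic (4 * q) ℤ) := by
  obtain ⟨a, b, hab⟩ : IsCoprime (p : ℤ) (q : ℤ) :=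
    Int.isCoprime_iff_gcd_eq_one.mpr (by
      simpa [Int.gcd_natCast_natCast] using (Nat.coprime_primes hp hq).mpr hpq)
  obtain ⟨s, t, hst⟩ := bez_pow_sub_one (4 * p) (4 * q)
  have hg : Nat.gcd (4 * p) (4 * q) = 4 := by
    rw [Nat.gcd_mul_left]
    simp [(Nat.coprime_primes hp hq).mpr hpq]
  rw [hg] at hst
  obtain ⟨c1, hc1⟩ := cyclotomic.dvd_X_pow_sub_one (4 * p) ℤ
  obtain ⟨c2, hc2⟩ := cyclotomic.dvd_X_pow_sub_one (4 * q) ℤ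
  obtain ⟨u1, w1, hu1⟩ := C_prime_mem p hp.one_lt
  obtain ⟨u2, w2, hu2⟩ := C_prime_mem q hq.one_lt
  have h4 : (X ^ 4 - 1 : Polynomial ℤ) = (s * c1) * cyclotomic (4 * p) ℤ
      + (t * c2) * cyclotomic (4 * q) ℤ := by
    linear_combination - hst + s * hc1 + t * hc2
  have hone : (C a) * (C (p : ℤ)) + (C b) * (C (q : ℤ)) = 1 := by
    rw [← C_mul, ← C_mul, ← C_add, hab, C_1]
  refine ⟨C a * u1 + C a * w1 * s * c1 + C b * w2 * s * c1,
         C b * u2 + C b * w2 * t * c2 + C a * w1 * t * c2, ?_⟩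
  linear_combination hone - C a * hu1 - C b * hu2 - (C a * w1 + C b * w2) * h4

lemma cyc_neg_X (q : ℕ) (hq : q.Prime) (hq2 : q ≠ 2) :
    (cyclotomic q ℤ).comp (-X) = cyclotomic (2 * q) ℤ := by
  haveI := Fact.mk hq
  have hodd : Odd q := hq.odd_of_ne_two hq2
  have key : cyclotomic q ℤ * (X - 1) = X ^ q - 1 := cyclotomic_prime_mul_X_sub_one ℤ q
  have h1 : (cyclotomic q ℤ).comp (-X) * (X + 1) = X ^ q + 1 := by
    have h := congrArg (fun f : Polynomial ℤ => f.comp (-X)) key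
    simp only [mul_comp, sub_comp, pow_comp, X_comp, one_comp] at h
    rw [hodd.neg_pow] at h
    linear_combination -h
  have h2 : cyclotomic (2 * q) ℤ * (X + 1) = X ^ q + 1 := by
    have e : expand ℤ 2 (cyclotomic q ℤ) = cyclotomic (q * 2) ℤ * cyclotomic q ℤ :=
      cyclotomic_expand_eq_cyclotomic_mul Nat.prime_two
        (fun h => hq2 ((Nat.prime_dvd_prime_iff_eq Nat.prime_two hq).mp h).symm) ℤ
    have e2 := congrArg (expand ℤ 2) key
    simp only [map_mul, map_sub, map_one, map_pow, expand_X, e] at e2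
    have hq0 : cyclotomic q ℤ * (X - 1) ≠ 0 := by
      rw [key]
      have : (X ^ q - C 1 : Polynomial ℤ).Monic := monic_X_pow_sub_C 1 hq.ne_zero
      simpa using this.ne_zero
    have hcancel : (cyclotomic q ℤ * (X - 1)) * (cyclotomic (2 * q) ℤ * (X + 1))
        = (cyclotomic q ℤ * (X - 1)) * (X ^ q + 1) := by
      rw [mul_comm q 2] at e2
      linear_combination e2 - (X ^ q + 1) * key
    exact mul_left_cancel₀ hq0 hcancel
  have hx : (X + 1 : Polynomial ℤ) ≠ 0 := by
    have : (X + C 1 : Polynomial ℤ).Monic := monic_X_add_C 1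
    simpa using this.ne_zero
  exact mul_right_cancel₀ hx (h1.trans h2.symm)

lemma cyc_comp_fact (p q : ℕ) (hp : p.Prime) (hq : q.Prime) (hp2 : p ≠ 2) (hq2 : q ≠ 2)
    (hpq : p ≠ q) :
    (cyclotomic q ℤ).comp (-(X ^ (2 * p))) = cyclotomic (4 * p * q) ℤ * cyclotomic (4 * q) ℤ := by
  have h1 : (cyclotomic q ℤ).comp (-(X ^ (2 * p)))
      = ((cyclotomic q ℤ).comp (-X)).comp (X ^ (2 * p)) := by
    rw [comp_assoc]; simp
  have hpdvd : ¬ p ∣ 2 * q := by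
    intro h
    rcases (Nat.Prime.dvd_mul hp).mp h with h2 | hq'
    · exact hp2 ((Nat.prime_dvd_prime_iff_eq hp Nat.prime_two).mp h2)
    · exact hpq ((Nat.prime_dvd_prime_iff_eq hp hq).mp hq')
  rw [h1, cyc_neg_X q hq hq2, ← expand_eq_comp_X_pow, ← expand_expand,
    cyclotomic_expand_eq_cyclotomic_mul hp hpdvd ℤ, map_mul,
    cyclotomic_expand_eq_cyclotomic Nat.prime_two ⟨q * p, by ring⟩ ℤ,
    cyclotomic_expand_eq_cyclotomic Nat.prime_two ⟨q, rfl⟩ ℤ,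
    show 2 * q * p * 2 = 4 * p * q by ring, show 2 * q * 2 = 4 * q by ring]

lemma mul_X_pow_add_one (p q : ℕ) (hq : q.Prime) (hq2 : q ≠ 2) :
    (X ^ (2 * p) + 1) * ((cyclotomic q ℤ).comp (-(X ^ (2 * p)))) = X ^ (2 * p * q) + 1 := by
  haveI := Fact.mk hq
  have hodd : Odd q := hq.odd_of_ne_two hq2
  have key : cyclotomic q ℤ * (X - 1) = X ^ q - 1 := cyclotomic_prime_mul_X_sub_one ℤ q
  have h := congrArg (fun f : Polynomial ℤ => f.comp (-(X ^ (2 * p)))) key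
  simp only [mul_comp, sub_comp, pow_comp, X_comp, one_comp] at h
  rw [hodd.neg_pow, ← pow_mul] at h
  linear_combination -h

/-- For `n = 2pq` with `p, q` distinct odd primes, every polynomial of
degree `< n` with coefficients in `{-1,0,1}` divisible by `Φ_{2n}` decomposes as
`f₁·Φ_q(-z^{2p}) + f₂·Φ_p(-z^{2q})` with `deg f₁ < 2p`, `deg f₂ < 2q`. -/
theorem stmt16 (p q n : ℕ) (hp : p.Prime) (hq : q.Prime) (hp2 : p ≠ 2) (hq2 : q ≠ 2)
    (hpq : p ≠ q) (hn : n = 2 * p * q)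
    (F : Polynomial ℤ) (hdeg : F.natDegree < n)
    (hcoeff : ∀ i, F.coeff i = -1 ∨ F.coeff i = 0 ∨ F.coeff i = 1)
    (hdvd : cyclotomic (2 * n) ℤ ∣ F) :
    ∃ f1 f2 : Polynomial ℤ, f1.natDegree < 2 * p ∧ f2.natDegree < 2 * q ∧
      F = f1 * (cyclotomic q ℤ).comp (-(X ^ (2 * p))) +
          f2 * (cyclotomic p ℤ).comp (-(X ^ (2 * q))) := by
  subst hn
  set A : Polynomial ℤ := (cyclotomic q ℤ).comp (-(X ^ (2 * p))) with hAdef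
  set B : Polynomial ℤ := (cyclotomic p ℤ).comp (-(X ^ (2 * q))) with hBdef
  have hA : A = cyclotomic (4 * p * q) ℤ * cyclotomic (4 * q) ℤ :=
    cyc_comp_fact p q hp hq hp2 hq2 hpq
  have hB : B = cyclotomic (4 * p * q) ℤ * cyclotomic (4 * p) ℤ := by
    rw [hBdef, cyc_comp_fact q p hq hp hq2 hp2 hpq.symm, show 4 * q * p = 4 * p * q by ring]
  rw [show 2 * (2 * p * q) = 4 * p * q by ring] at hdvd
  obtain ⟨G, hG⟩ := hdvd
  obtain ⟨u, v, huv⟩ := cyc_coprime q p hq hp hpq.symm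
  have hF0 : F = (G * u) * A + (G * v) * B := by
    rw [hA, hB]
    linear_combination hG - cyclotomic (4 * p * q) ℤ * G * huv
  -- degree reduction
  have hppos : 0 < p := hp.pos
  have hqpos : 0 < q := hq.pos
  have hM : (X ^ (2 * p) + 1 : Polynomial ℤ).Monic := by
    simpa using monic_X_pow_add_C (R := ℤ) 1 (by omega : 2 * p ≠ 0)
  set f1 : Polynomial ℤ := (G * u) %ₘ (X ^ (2 * p) + 1) with hf1def
  set g : Polynomial ℤ := (G * u) /ₘ (X ^ (2 * p) + 1) with hgdef
  have hdiv : f1 + (X ^ (2 * p) + 1) * g = G * u := modByMonic_add_div (G * u) _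
  set f2 : Polynomial ℤ := G * v + g * (X ^ (2 * q) + 1) with hf2def
  have hP : (X ^ (2 * p) + 1) * A = X ^ (2 * p * q) + 1 := mul_X_pow_add_one p q hq hq2
  have hQ : (X ^ (2 * q) + 1) * B = X ^ (2 * p * q) + 1 := by
    have := mul_X_pow_add_one q p hp hp2
    rwa [show 2 * q * p = 2 * p * q by ring] at this
  have hF : F = f1 * A + f2 * B := by
    rw [hf2def]
    linear_combination hF0 - A * hdiv + g * hP - g * hQ
  have hT : (X ^ (2 * p * q) + 1 : Polynomial ℤ).natDegree = 2 * p * q := by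
    simpa using natDegree_X_pow_add_C (R := ℤ) (n := 2 * p * q) (r := 1)
  have hTne : (X ^ (2 * p * q) + 1 : Polynomial ℤ) ≠ 0 := by
    have : (X ^ (2 * p * q) + C 1 : Polynomial ℤ).Monic :=
      monic_X_pow_add_C 1 (by positivity : 2 * p * q ≠ 0)
    simpa using this.ne_zero
  have hMnd : (X ^ (2 * p) + 1 : Polynomial ℤ).natDegree = 2 * p := by
    simpa using natDegree_X_pow_add_C (R := ℤ) (n := 2 * p) (r := 1)
  have hAne : A ≠ 0 := by
    intro h
    rw [h, mul_zero] at hP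
    exact hTne hP.symm
  have hBne : B ≠ 0 := by
    intro h
    rw [h, mul_zero] at hQ
    exact hTne hQ.symm
  have hAnd : 2 * p + A.natDegree = 2 * p * q := by
    have := congrArg natDegree hP
    rwa [natDegree_mul hM.ne_zero hAne, hT, hMnd] at this
  have hBnd : 2 * q + B.natDegree = 2 * p * q := by
    have := congrArg natDegree hQ
    have hN : (X ^ (2 * q) + 1 : Polynomial ℤ).natDegree = 2 * q := by
      simpa using natDegree_X_pow_add_C (R := ℤ) (n := 2 * q) (r := 1)
    have hNm : (X ^ (2 * q) + 1 : Polynomial ℤ).Monic := by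
      simpa using monic_X_pow_add_C (R := ℤ) 1 (by omega : 2 * q ≠ 0)
    rwa [natDegree_mul hNm.ne_zero hBne, hT, hN] at this
  have hf1deg : f1.natDegree < 2 * p := by
    have hne1 : (X ^ (2 * p) + 1 : Polynomial ℤ) ≠ 1 := by
      intro h
      have := congrArg natDegree h
      rw [hMnd, natDegree_one] at this
      omega
    have := natDegree_modByMonic_lt (G * u) hM hne1
    rwa [hMnd] at this
  have hf2deg : f2.natDegree < 2 * q := by
    by_cases h0 : f2 = 0
    · rw [h0, natDegree_zero]; omega
    · have hmul : f2 * B = F - f1 * A := by linear_combination - hF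
      have hnd1 : (f2 * B).natDegree = f2.natDegree + B.natDegree :=
        natDegree_mul h0 hBne
      have hlt : (F - f1 * A).natDegree < 2 * p * q := by
        apply lt_of_le_of_lt (natDegree_sub_le F (f1 * A))
        apply max_lt hdeg
        apply lt_of_le_of_lt (natDegree_mul_le)
        omega
      rw [← hmul, hnd1] at hlt
      omega
  exact ⟨f1, f2, hf1deg, hf2deg, hF⟩
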